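/- The second derivative with respect to θ of P_n^m(cos θ) satisfies ∂_θ² P_n^m(cos θ) = (1/sin² θ)·[ (n+1 + (n+1)² cos² θ) P_n^m(cos θ) − 2 cos θ (n−m+1)(n+2) P_{n+1}^m(cos θ) + (n−m+1)(n−m+2) P_{n+2}^m(cos θ) ] for θ ∈ (0, π). -/

import Mathlib

open Real

/-- Legendre polynomial via Rodrigues' formula. -/
noncomputable def legendreP (n : ℕ) (x : ℝ) : ℝ :=
  (1 / (2 ^ n * (Nat.factorial n : ℝ))) * iteratedDeriv n (fun y : ℝ => (y ^ 2 - 1) ^ n) x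

/-- Associated Legendre polynomial. -/
noncomputable def assocLegendreP (m n : ℕ) (x : ℝ) : ℝ :=
  (-1 : ℝ) ^ m * (1 - x ^ 2) ^ ((m : ℝ) / 2) * iteratedDeriv m (legendreP n) x

namespace LegAux
open Polynomial

noncomputable def uu (n : ℕ) : Polynomial ℝ := (X ^ 2 - 1) ^ n

lemma DS (j : ℕ) (g : Polynomial ℝ) : derivative (derivative^[j] g) = derivative^[j+1] g :=
  (Function.iterate_succ_apply' _ _ _).symm

lemma DS' (j : ℕ) (g : Polynomial ℝ) : derivative^[j] (derivative g) = derivative^[j+1] g :=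
  (Function.iterate_succ_apply _ _ _).symm

lemma hdX : (derivative (X^2 - 1) : Polynomial ℝ) = 2 * X := by
  simp [derivative_sub, derivative_pow, map_ofNat]

lemma iterA (k : ℕ) (g : Polynomial ℝ) :
    derivative^[k+1] (X * g) = X * derivative^[k+1] g + C ((k:ℝ)+1) * derivative^[k] g := by
  induction k generalizing g with
  | zero => simp [derivative_mul]; ring
  | succ k ih =>
    rw [← DS, ih]
    simp only [derivative_add, derivative_mul, derivative_X, derivative_C, DS, DS']
    simp only [C_add, C_1, C_eq_natCast]
    push_cast
    ring

lemma iterR (k : ℕ) (g : Polynomial ℝ) :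
    derivative^[k+1] ((X^2 - 1) * derivative g) =
      (X^2-1) * derivative^[k+2] g + C (2*((k:ℝ)+1)) * X * derivative^[k+1] g
        + C (((k:ℝ)+1)*k) * derivative^[k] g := by
  induction k generalizing g with
  | zero =>
    simp only [zero_add, Function.iterate_one, derivative_mul, hdX]
    simp only [C_mul, C_add, C_1, C_eq_natCast, map_ofNat, DS, DS']
    norm_num
    ring
  | succ k ih =>
    rw [← DS, ih]
    simp only [derivative_add, derivative_mul, derivative_X, derivative_C, hdX, DS, DS']
    simp only [C_mul, C_add, C_1, C_eq_natCast, map_ofNat]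
    push_cast
    ring

lemma fact1 (n : ℕ) : derivative (uu (n+1)) = C (2*((n:ℝ)+1)) * (X * uu n) := by
  rw [uu, uu, derivative_pow, hdX]
  simp only [C_mul, C_add, C_1, C_eq_natCast, map_ofNat]
  push_cast
  ring

lemma fact2 (n : ℕ) : (X^2-1) * derivative (uu n) = C (2*(n:ℝ)) * (X * uu n) := by
  cases n with
  | zero => simp [uu]
  | succ n =>
    rw [fact1 n]
    have h : uu (n+1) = (X^2-1) * uu n := by rw [uu, uu, pow_succ]; ring
    rw [h]
    simp only [C_mul, C_add, C_1, C_eq_natCast, map_ofNat]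
    push_cast
    ring

noncomputable def LPol (n : ℕ) : Polynomial ℝ :=
  C (1 / (2 ^ n * (Nat.factorial n : ℝ))) * derivative^[n] (uu n)

noncomputable def QPol (m n : ℕ) : Polynomial ℝ := derivative^[m] (LPol n)

lemma QPol_eq (m n : ℕ) :
    QPol m n = C (1 / (2 ^ n * (Nat.factorial n : ℝ))) * derivative^[n + m] (uu n) := by
  rw [QPol, LPol, iterate_derivative_C_mul, ← Function.iterate_add_apply, Nat.add_comm m n]

lemma QPol_succ (m n : ℕ) : QPol (m+1) n = derivative (QPol m n) := by
  rw [QPol, QPol, Function.iterate_succ_apply']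

lemma star_alg (x nn mm j c c1 p0 p1 p2 : ℝ) (hc : 2*(nn+1)*c1 = c) (hj : j = nn+mm-1)
    (hE : (x^2-1)*p2 + 2*(j+1)*x*p1 + (j+1)*j*p0 = 2*nn*(x*p1+(j+1)*p0)) :
    (1-x^2)*(c*p2) = (mm+nn+1)*x*(c*p1) - (nn-mm+1)*(c1*(2*(nn+1)*(x*p1+(j+1)*p0))) := by
  subst hj
  linear_combination (-c)*hE + ((nn-mm+1)*(x*p1+(nn+mm)*p0))*hc

lemma starEval (m n : ℕ) (x : ℝ) :
    (1 - x^2) * (QPol (m+1) n).eval x =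
      ((m:ℝ)+n+1) * x * (QPol m n).eval x - ((n:ℝ)-m+1) * (QPol m (n+1)).eval x := by
  rcases hnm : n + m with _ | j
  · obtain ⟨hn, hm⟩ := Nat.add_eq_zero.mp hnm
    subst hn; subst hm
    simp [QPol, LPol, uu, Nat.factorial]
    ring
  · have hj2 : n + 1 + m = j + 2 := by omega
    rw [QPol_succ, QPol_eq m n, QPol_eq m (n+1), hnm, hj2]
    have hEpoly : derivative^[j+1] ((X^2-1) * derivative (uu n))
        = derivative^[j+1] (C (2*(n:ℝ)) * (X * uu n)) := by rw [fact2]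
    rw [iterR, iterate_derivative_C_mul, iterA] at hEpoly
    have h2poly : derivative^[j+2] (uu (n+1))
        = C (2*((n:ℝ)+1)) * (X * derivative^[j+1] (uu n) + C ((j:ℝ)+1) * derivative^[j] (uu n)) := by
      rw [← DS' (j+1), fact1, iterate_derivative_C_mul, iterA]
    have hE := congrArg (fun p => Polynomial.eval x p) hEpoly
    have h2 := congrArg (fun p => Polynomial.eval x p) h2poly
    simp only [eval_add, eval_mul, eval_C, eval_X, eval_pow, eval_sub, eval_one,
      eval_ofNat] at hE h2 ⊢
    rw [derivative_C_mul, DS]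
    simp only [eval_add, eval_mul, eval_C, eval_X, eval_pow, eval_sub, eval_one, eval_ofNat]
    rw [h2]
    have hjr : (j:ℝ) = (n:ℝ) + (m:ℝ) - 1 := by
      have := congrArg (Nat.cast : ℕ → ℝ) hnm
      push_cast at this; linarith
    have hcc : 2*((n:ℝ)+1) * (1 / (2 ^ (n+1) * (Nat.factorial (n+1) : ℝ)))
        = 1 / (2 ^ n * (Nat.factorial n : ℝ)) := by
      rw [Nat.factorial_succ]
      push_cast
      have h1 : (Nat.factorial n : ℝ) ≠ 0 := Nat.cast_ne_zero.mpr (Nat.factorial_ne_zero n)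
      field_simp
      ring
    have := star_alg x (n:ℝ) (m:ℝ) (j:ℝ)
      (1 / (2 ^ n * (Nat.factorial n : ℝ))) (1 / (2 ^ (n+1) * (Nat.factorial (n+1) : ℝ)))
      ((derivative^[j] (uu n)).eval x) ((derivative^[j+1] (uu n)).eval x)
      ((derivative^[j+2] (uu n)).eval x) hcc hjr (by linarith [hE])
    linarith [this]

lemma polyIter (k : ℕ) (p : Polynomial ℝ) :
    iteratedDeriv k (fun y : ℝ => p.eval y) = fun y => (derivative^[k] p).eval y := by
  induction k generalizing p with
  | zero => simp [iteratedDeriv_zero]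
  | succ k ih =>
    rw [iteratedDeriv_succ', Function.iterate_succ_apply]
    rw [show (deriv fun y : ℝ => p.eval y) = fun y => (derivative p).eval y from
      funext fun y => Polynomial.deriv p]
    exact ih (derivative p)

lemma legendreP_eval (n : ℕ) (x : ℝ) : legendreP n x = (LPol n).eval x := by
  rw [legendreP, LPol, eval_mul, eval_C]
  congr 1
  rw [show (fun y : ℝ => (y ^ 2 - 1) ^ n) = fun y : ℝ => (uu n).eval y from
    funext fun y => by simp [uu], polyIter]

lemma assoc_eval (m n : ℕ) (x : ℝ) :
    assocLegendreP m n x = (-1:ℝ)^m * (1 - x^2) ^ ((m:ℝ)/2) * (QPol m n).eval x := by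
  rw [assocLegendreP, QPol]
  congr 1
  rw [show legendreP n = fun y : ℝ => (LPol n).eval y from funext fun y => legendreP_eval n y,
    polyIter]

lemma sinpow_eq (m : ℕ) {θ : ℝ} (hθ : θ ∈ Set.Ioo 0 π) :
    ((1 : ℝ) - Real.cos θ ^ 2) ^ ((m:ℝ)/2) = Real.sin θ ^ m := by
  have hs : (0:ℝ) ≤ Real.sin θ := le_of_lt (Real.sin_pos_of_pos_of_lt_pi hθ.1 hθ.2)
  rw [show (1:ℝ) - Real.cos θ^2 = Real.sin θ^2 from by rw [Real.sin_sq],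
    ← Real.rpow_natCast (Real.sin θ) 2, ← Real.rpow_mul hs,
    show ((2:ℕ):ℝ) * ((m:ℝ)/2) = (m:ℝ) from by push_cast; ring,
    Real.rpow_natCast]

lemma hasDerivAt_G (m n : ℕ) (θ : ℝ) :
    HasDerivAt (fun t => (-1:ℝ)^m * (Real.sin t ^ m * (QPol m n).eval (Real.cos t)))
      ((-1:ℝ)^m * (((m:ℝ) * Real.sin θ^(m-1) * Real.cos θ) * (QPol m n).eval (Real.cos θ)
        + Real.sin θ^m * ((derivative (QPol m n)).eval (Real.cos θ) * (-Real.sin θ)))) θ := by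
  have h1 : HasDerivAt (fun t : ℝ => Real.sin t ^ m) ((m:ℝ) * Real.sin θ^(m-1) * Real.cos θ) θ :=
    (Real.hasDerivAt_sin θ).pow m
  have h2 : HasDerivAt (fun t : ℝ => (QPol m n).eval (Real.cos t))
      ((derivative (QPol m n)).eval (Real.cos θ) * (-Real.sin θ)) θ :=
    (Polynomial.hasDerivAt (QPol m n) (Real.cos θ)).comp θ (Real.hasDerivAt_cos θ)
  exact (h1.mul h2).const_mul _

lemma deriv_assoc (m n : ℕ) {θ : ℝ} (hθ : θ ∈ Set.Ioo 0 π) :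
    HasDerivAt (fun t => assocLegendreP m n (Real.cos t))
      ((-1/Real.sin θ) * (((n:ℝ)+1) * Real.cos θ * assocLegendreP m n (Real.cos θ)
        - ((n:ℝ)-(m:ℝ)+1) * assocLegendreP m (n+1) (Real.cos θ))) θ := by
  have hs : (0:ℝ) < Real.sin θ := Real.sin_pos_of_pos_of_lt_pi hθ.1 hθ.2
  have hFG : ∀ k, ∀ t ∈ Set.Ioo 0 π, assocLegendreP m k (Real.cos t)
      = (-1:ℝ)^m * (Real.sin t ^ m * (QPol m k).eval (Real.cos t)) := by
    intro k t ht
    have : (1:ℝ) - Real.cos t ^ 2 = 1 - Real.cos t ^ 2 := rfl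
    rw [assoc_eval, sinpow_eq m ht]; ring
  have hG := hasDerivAt_G m n θ
  have hF := hG.congr_of_eventuallyEq
    (Filter.eventuallyEq_of_mem (isOpen_Ioo.mem_nhds hθ) (hFG n))
  have hval : (-1:ℝ)^m * (((m:ℝ) * Real.sin θ^(m-1) * Real.cos θ) * (QPol m n).eval (Real.cos θ)
        + Real.sin θ^m * ((derivative (QPol m n)).eval (Real.cos θ) * (-Real.sin θ)))
      = (-1/Real.sin θ) * (((n:ℝ)+1) * Real.cos θ * assocLegendreP m n (Real.cos θ)
        - ((n:ℝ)-(m:ℝ)+1) * assocLegendreP m (n+1) (Real.cos θ)) := by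
    rw [hFG n θ hθ, hFG (n+1) θ hθ]
    have hstar := starEval m n (Real.cos θ)
    rw [QPol_succ] at hstar
    have hs2 : Real.sin θ^2 = 1 - Real.cos θ^2 := Real.sin_sq θ
    rw [div_mul_eq_mul_div, eq_div_iff hs.ne']
    rcases m with _ | k
    · norm_num at hstar ⊢
      linear_combination (-1:ℝ)*hstar
        + (-(Polynomial.eval (Real.cos θ) (Polynomial.derivative (QPol 0 n))))*hs2
    · push_cast at hstar ⊢
      linear_combination (-(-1:ℝ)^(k+1) * Real.sin θ^(k+1)) * hstar
        + (-(-1:ℝ)^(k+1) * (Polynomial.eval (Real.cos θ) (Polynomial.derivative (QPol (k+1) n)))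
            * Real.sin θ^(k+1)) * hs2
  exact hval ▸ hF

end LegAux

open LegAux in
theorem deriv2_assocLegendre_cos (n m : ℕ) (hm : m ≤ n) (θ : ℝ) (hθ : θ ∈ Set.Ioo 0 π) :
    deriv (deriv (fun t : ℝ => assocLegendreP m n (Real.cos t))) θ =
      (1 / Real.sin θ ^ 2) *
        ((((n : ℝ) + 1) + ((n : ℝ) + 1) ^ 2 * Real.cos θ ^ 2) * assocLegendreP m n (Real.cos θ)
          - 2 * Real.cos θ * ((n : ℝ) - (m : ℝ) + 1) * ((n : ℝ) + 2) *
              assocLegendreP m (n + 1) (Real.cos θ)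
          + ((n : ℝ) - (m : ℝ) + 1) * ((n : ℝ) - (m : ℝ) + 2) *
              assocLegendreP m (n + 2) (Real.cos θ)) := by
  have hs : (0:ℝ) < Real.sin θ := Real.sin_pos_of_pos_of_lt_pi hθ.1 hθ.2
  have hEq : deriv (fun t : ℝ => assocLegendreP m n (Real.cos t))
      =ᶠ[nhds θ] fun t => -(Real.sin t)⁻¹ *
        (((n:ℝ)+1) * Real.cos t * assocLegendreP m n (Real.cos t)
          - ((n:ℝ)-(m:ℝ)+1) * assocLegendreP m (n+1) (Real.cos t)) := by
    apply Filter.eventuallyEq_of_mem (isOpen_Ioo.mem_nhds hθ)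
    intro t ht
    rw [(LegAux.deriv_assoc m n ht).deriv]
    ring
  rw [hEq.deriv_eq]
  have hu := ((Real.hasDerivAt_sin θ).inv hs.ne').neg
  have hA := (((Real.hasDerivAt_cos θ).const_mul ((n:ℝ)+1)).mul (LegAux.deriv_assoc m n hθ)).sub
    ((LegAux.deriv_assoc m (n+1) hθ).const_mul (((n:ℝ)-(m:ℝ)+1)))
  have hH := hu.mul hA
  rw [(show HasDerivAt (fun t : ℝ => -(Real.sin t)⁻¹ * (((n:ℝ)+1) * Real.cos t * assocLegendreP m n (Real.cos t) - ((n:ℝ)-(m:ℝ)+1) * assocLegendreP m (n+1) (Real.cos t))) _ θ from hH).deriv]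
  simp only [Pi.mul_apply, Pi.sub_apply, Pi.neg_apply, Pi.inv_apply, Nat.cast_add, Nat.cast_one]
  have hs2 : Real.sin θ^2 = 1 - Real.cos θ^2 := Real.sin_sq θ
  set s := Real.sin θ
  set c := Real.cos θ
  set F0 := assocLegendreP m n c
  set F1 := assocLegendreP m (n+1) c
  set F2 := assocLegendreP m (n+2) c
  field_simp
  linear_combination (((n:ℝ)+1) * F0) * hs2
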